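/- Let p₀ and p be choice models such that for every s ∈ 𝕊 with π_S(s) > 0 and every a ∈ s ∪ {0} with p₀(a|s) > 0 one has p(a|s) > 0 and log(p₀(a|s)/p(a|s)) ≤ τ, where τ > 0. Writing f(s,a) = log(p₀(a|s)/p(a|s)), it holds that Σ_{s∈𝕊} π_S(s) Σ_{a∈s∪{0}} p₀(a|s) · ( e^{|f(s,a)|/2} − 1 − |f(s,a)|/2 ) ≤ κ(τ) · H²(p,p₀), where κ(τ) = 2(e^{τ/2} − 1 − τ/2)/(1 − e^{-τ/2})². -/

import Mathlib

open Finset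

/-- Squared Hellinger distance between two choice models at assortment `s`. -/
noncomputable def hsq (p₁ p₂ : Finset ℕ → ℕ → ℝ) (s : Finset ℕ) : ℝ :=
  (1 / 2) * ∑ a ∈ insert 0 s, (Real.sqrt (p₁ s a) - Real.sqrt (p₂ s a)) ^ 2

/-- Generalized squared Hellinger distance. -/
noncomputable def Hsq (𝕊 : Finset (Finset ℕ)) (π : Finset ℕ → ℝ)
    (p₁ p₂ : Finset ℕ → ℕ → ℝ) : ℝ :=
  ∑ s ∈ 𝕊, π s * hsq p₁ p₂ s

/-- `p` is a choice model over the assortment family `𝕊`. -/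
def IsChoiceModel (𝕊 : Finset (Finset ℕ)) (p : Finset ℕ → ℕ → ℝ) : Prop :=
  ∀ s ∈ 𝕊, (∀ a ∈ insert 0 s, 0 ≤ p s a) ∧ ∑ a ∈ insert 0 s, p s a = 1

/-- `𝕊` is a nonempty family of nonempty assortments of items `{1,…,N}`. -/
def IsAssortmentFamily (N : ℕ) (𝕊 : Finset (Finset ℕ)) : Prop :=
  𝕊.Nonempty ∧ ∀ s ∈ 𝕊, s.Nonempty ∧ s ⊆ Finset.Icc 1 N

/-- `π` is a probability mass function on `𝕊`. -/
def IsPMF (𝕊 : Finset (Finset ℕ)) (π : Finset ℕ → ℝ) : Prop :=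
  (∀ s, 0 ≤ π s) ∧ ∑ s ∈ 𝕊, π s = 1


private lemma mono_from_deriv {f f' : ℝ → ℝ} (hd : ∀ x, HasDerivAt f (f' x) x)
    (hnn : ∀ x, 0 ≤ f' x) : Monotone f :=
  monotone_of_deriv_nonneg (fun x => (hd x).differentiableAt)
    (fun x => by rw [(hd x).deriv]; exact hnn x)

private lemma aux_r {x : ℝ} (hx : 0 ≤ x) : 0 ≤ (x - 2) * Real.exp x + x + 2 := by
  have hmono : Monotone (fun x : ℝ => (x - 2) * Real.exp x + x + 2) := by
    apply mono_from_deriv (f' := fun x => (x - 1) * Real.exp x + 1)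
    · intro x
      have h1 : HasDerivAt (fun x : ℝ => (x - 2) * Real.exp x)
          (1 * Real.exp x + (x - 2) * Real.exp x) x :=
        ((hasDerivAt_id x).sub_const 2).mul (Real.hasDerivAt_exp x)
      have h2 := (h1.add (hasDerivAt_id x)).add_const 2
      exact h2.congr_deriv (by ring)
    · intro x
      have h1 : -x + 1 ≤ Real.exp (-x) := Real.add_one_le_exp (-x)
      have h2 : Real.exp (-x) * Real.exp x = 1 := by
        rw [← Real.exp_add]; simp
      nlinarith [Real.exp_pos x, h1, h2]
  have h0 := hmono hx
  simp only [Real.exp_zero] at h0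
  linarith [h0]

private lemma aux_q {v : ℝ} (hv : 0 ≤ v) :
    Real.exp v - 1 - v ≤ (1 / 2) * (Real.exp v - 1) ^ 2 := by
  have hmono : Monotone
      (fun v : ℝ => (1 / 2) * (Real.exp v - 1) ^ 2 - (Real.exp v - 1 - v)) := by
    apply mono_from_deriv (f' := fun v => (Real.exp v - 1) ^ 2)
    · intro v
      have h1 : HasDerivAt (fun v : ℝ => Real.exp v - 1) (Real.exp v) v :=
        (Real.hasDerivAt_exp v).sub_const 1
      have h2 : HasDerivAt (fun v : ℝ => (Real.exp v - 1) ^ 2)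
          (2 * (Real.exp v - 1) ^ 1 * Real.exp v) v := h1.pow 2
      have h3 := (h2.const_mul (1/2 : ℝ)).sub
        ((Real.hasDerivAt_exp v).sub_const 1 |>.sub (hasDerivAt_id v))
      exact h3.congr_deriv (by ring)
    · intro v; positivity
  have h0 := hmono hv
  simp only [Real.exp_zero] at h0
  nlinarith [h0]

private lemma aux_s {t : ℝ} (ht : 0 ≤ t) : t ^ 2 / 2 ≤ Real.exp t - 1 - t := by
  have hmono : Monotone (fun t : ℝ => Real.exp t - 1 - t - t ^ 2 / 2) := by
    apply mono_from_deriv (f' := fun t => Real.exp t - 1 - t)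
    · intro t
      have h1 := ((Real.hasDerivAt_exp t).sub_const 1).sub (hasDerivAt_id t)
      have h2 : HasDerivAt (fun t : ℝ => t ^ 2 / 2) (2 * t ^ 1 / 2) t := by
        have := (hasDerivAt_pow 2 t).div_const 2
        exact this.congr_deriv (by push_cast; ring)
      have h3 := h1.sub h2
      exact h3.congr_deriv (by ring)
    · intro t
      nlinarith [Real.add_one_le_exp t]
  have h0 := hmono ht
  simp only [Real.exp_zero] at h0
  nlinarith [h0]

private lemma aux_A {u t : ℝ} (hu : 0 < u) (hut : u ≤ t) :
    t ^ 2 * (Real.exp u - 1 - u) ≤ u ^ 2 * (Real.exp t - 1 - t) := by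
  have hmono : MonotoneOn (fun x : ℝ => (Real.exp x - 1 - x) / x ^ 2) (Set.Ioi 0) := by
    have hder : ∀ x ∈ Set.Ioi (0:ℝ), HasDerivAt (fun x : ℝ => (Real.exp x - 1 - x) / x ^ 2)
        (((Real.exp x - 1) * x ^ 2 - (Real.exp x - 1 - x) * (2 * x)) / (x ^ 2) ^ 2) x := by
      intro x hx
      have hxpos : (0:ℝ) < x := hx
      have hx0 : (x:ℝ) ^ 2 ≠ 0 := pow_ne_zero 2 hxpos.ne'
      have hnum : HasDerivAt (fun x : ℝ => Real.exp x - 1 - x) (Real.exp x - 1) x := by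
        have := ((Real.hasDerivAt_exp x).sub_const 1).sub (hasDerivAt_id x)
        exact this.congr_deriv (by simp)
      have hden : HasDerivAt (fun x : ℝ => x ^ 2) ((2:ℕ) * x ^ 1) x := hasDerivAt_pow 2 x
      have := hnum.div hden hx0
      exact this.congr_deriv (by push_cast; ring)
    apply monotoneOn_of_deriv_nonneg (convex_Ioi 0)
    · exact fun x hx => ((hder x hx).continuousAt).continuousWithinAt
    · rw [interior_Ioi]
      exact fun x hx => ((hder x hx).differentiableAt).differentiableWithinAt
    · rw [interior_Ioi]
      intro x hx
      rw [(hder x hx).deriv]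
      have hxpos : (0:ℝ) < x := hx
      have hr := aux_r hxpos.le
      have hnum : (Real.exp x - 1) * x ^ 2 - (Real.exp x - 1 - x) * (2 * x)
          = x * ((x - 2) * Real.exp x + x + 2) := by ring
      rw [hnum]
      positivity
  have ht0 : 0 < t := lt_of_lt_of_le hu hut
  have h := hmono (Set.mem_Ioi.mpr hu) (Set.mem_Ioi.mpr ht0) hut
  rw [div_le_div_iff₀ (by positivity) (by positivity)] at h
  linarith [h]

private lemma aux_B {u t : ℝ} (hu : 0 ≤ u) (hut : u ≤ t) (ht : 0 < t) :
    u * (1 - Real.exp (-t)) ≤ t * (1 - Real.exp (-u)) := by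
  have ha : (0:ℝ) ≤ 1 - u / t := by
    rw [sub_nonneg]; exact div_le_one_of_le₀ hut ht.le
  have hb : (0:ℝ) ≤ u / t := by positivity
  have hab : (1 - u / t) + u / t = 1 := by ring
  have hcvx := convexOn_exp.2 (Set.mem_univ (0:ℝ)) (Set.mem_univ (-t)) ha hb hab
  simp only [smul_eq_mul, mul_zero, zero_add, Real.exp_zero, mul_one] at hcvx
  have harg : u / t * -t = -u := by field_simp
  rw [harg] at hcvx
  have h := mul_le_mul_of_nonneg_left hcvx ht.le
  have ht0 : t ≠ 0 := ht.ne'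
  have hexp : t * ((1 - u / t) + u / t * Real.exp (-t)) = t - u + u * Real.exp (-t) := by
    first
    | (field_simp; ring)
    | field_simp
  rw [hexp] at h
  linarith [h]

private lemma g_half {t : ℝ} (ht : 0 < t) :
    (1:ℝ) / 2 ≤ (Real.exp t - 1 - t) / (1 - Real.exp (-t)) ^ 2 := by
  have h1 : Real.exp (-t) < 1 := Real.exp_lt_one_iff.mpr (by linarith)
  have h2 : 1 - Real.exp (-t) ≤ t := by nlinarith [Real.add_one_le_exp (-t)]
  have h3 : 0 < 1 - Real.exp (-t) := by linarith [Real.exp_pos (-t)]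
  have h4 : (1 - Real.exp (-t)) ^ 2 ≤ t ^ 2 := by nlinarith
  have h5 := aux_s ht.le
  rw [le_div_iff₀ (by positivity)]
  linarith

private lemma exp_sq_id {u : ℝ} :
    (Real.exp u - 1) ^ 2 = Real.exp (2 * u) * (Real.exp (-u) - 1) ^ 2 := by
  have h2u : Real.exp (2 * u) = Real.exp u * Real.exp u := by
    rw [← Real.exp_add]; ring_nf
  have he : Real.exp u * Real.exp (-u) = 1 := by rw [← Real.exp_add]; simp
  calc (Real.exp u - 1) ^ 2 = (Real.exp u * Real.exp (-u) - Real.exp u) ^ 2 := by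
        rw [he]; ring
    _ = Real.exp (2 * u) * (Real.exp (-u) - 1) ^ 2 := by rw [h2u]; ring

private lemma key {t u : ℝ} (ht : 0 < t) (hu : u ≤ t) :
    Real.exp (2 * u) * (Real.exp |u| - 1 - |u|) ≤
      (Real.exp t - 1 - t) / (1 - Real.exp (-t)) ^ 2 * (Real.exp u - 1) ^ 2 := by
  set G := (Real.exp t - 1 - t) / (1 - Real.exp (-t)) ^ 2 with hGdef
  have hG : (1:ℝ)/2 ≤ G := g_half ht
  rcases le_or_gt u 0 with hu0 | hu0
  · -- u ≤ 0
    have habs : |u| = -u := abs_of_nonpos hu0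
    rw [habs, exp_sq_id]
    have hv : (0:ℝ) ≤ -u := by linarith
    have hq := aux_q hv
    have step : Real.exp (-u) - 1 - -u ≤ G * (Real.exp (-u) - 1) ^ 2 := by
      nlinarith [sq_nonneg (Real.exp (-u) - 1)]
    calc Real.exp (2 * u) * (Real.exp (-u) - 1 - -u)
        ≤ Real.exp (2 * u) * (G * (Real.exp (-u) - 1) ^ 2) :=
          mul_le_mul_of_nonneg_left step (Real.exp_pos _).le
      _ = G * (Real.exp (2 * u) * (Real.exp (-u) - 1) ^ 2) := by ring
  · -- 0 < u
    have habs : |u| = u := abs_of_pos hu0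
    rw [habs]
    have hA := aux_A hu0 hu
    have hB := aux_B hu0.le hu ht
    have hDt : 0 < 1 - Real.exp (-t) := by
      have : Real.exp (-t) < 1 := Real.exp_lt_one_iff.mpr (by linarith)
      linarith
    have hDu : 0 < 1 - Real.exp (-u) := by
      have : Real.exp (-u) < 1 := Real.exp_lt_one_iff.mpr (by linarith)
      linarith
    have hBsq : u ^ 2 * (1 - Real.exp (-t)) ^ 2 ≤ t ^ 2 * (1 - Real.exp (-u)) ^ 2 := by
      calc u ^ 2 * (1 - Real.exp (-t)) ^ 2 = (u * (1 - Real.exp (-t))) ^ 2 := by ring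
        _ ≤ (t * (1 - Real.exp (-u))) ^ 2 := by
            apply pow_le_pow_left₀ (by positivity) hB
        _ = t ^ 2 * (1 - Real.exp (-u)) ^ 2 := by ring
    have hFu : 0 ≤ Real.exp u - 1 - u := by nlinarith [Real.add_one_le_exp u]
    have hFt : 0 ≤ Real.exp t - 1 - t := by nlinarith [Real.add_one_le_exp t]
    have hmain : (Real.exp u - 1 - u) * (1 - Real.exp (-t)) ^ 2 ≤
        (Real.exp t - 1 - t) * (1 - Real.exp (-u)) ^ 2 := by
      have h1 : (t ^ 2 * (Real.exp u - 1 - u)) * (u ^ 2 * (1 - Real.exp (-t)) ^ 2) ≤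
          (u ^ 2 * (Real.exp t - 1 - t)) * (t ^ 2 * (1 - Real.exp (-u)) ^ 2) :=
        mul_le_mul hA hBsq (by positivity) (by positivity)
      have hpos : (0:ℝ) < u ^ 2 * t ^ 2 := by positivity
      have h2 : (u ^ 2 * t ^ 2) * ((Real.exp u - 1 - u) * (1 - Real.exp (-t)) ^ 2) ≤
          (u ^ 2 * t ^ 2) * ((Real.exp t - 1 - t) * (1 - Real.exp (-u)) ^ 2) := by
        calc (u ^ 2 * t ^ 2) * ((Real.exp u - 1 - u) * (1 - Real.exp (-t)) ^ 2)
            = (t ^ 2 * (Real.exp u - 1 - u)) * (u ^ 2 * (1 - Real.exp (-t)) ^ 2) := by ring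
          _ ≤ (u ^ 2 * (Real.exp t - 1 - t)) * (t ^ 2 * (1 - Real.exp (-u)) ^ 2) := h1
          _ = (u ^ 2 * t ^ 2) * ((Real.exp t - 1 - t) * (1 - Real.exp (-u)) ^ 2) := by ring
      exact le_of_mul_le_mul_left h2 hpos
    have hsq2 : (Real.exp u - 1) ^ 2 = Real.exp (2 * u) * (1 - Real.exp (-u)) ^ 2 := by
      have := exp_sq_id (u := u)
      calc (Real.exp u - 1) ^ 2 = Real.exp (2*u) * (Real.exp (-u) - 1) ^ 2 := this
        _ = Real.exp (2 * u) * (1 - Real.exp (-u)) ^ 2 := by ring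
    rw [hsq2, hGdef]
    rw [div_mul_eq_mul_div, le_div_iff₀ (by positivity)]
    calc Real.exp (2 * u) * (Real.exp u - 1 - u) * (1 - Real.exp (-t)) ^ 2
        = Real.exp (2 * u) * ((Real.exp u - 1 - u) * (1 - Real.exp (-t)) ^ 2) := by ring
      _ ≤ Real.exp (2 * u) * ((Real.exp t - 1 - t) * (1 - Real.exp (-u)) ^ 2) :=
          mul_le_mul_of_nonneg_left hmain (Real.exp_pos _).le
      _ = (Real.exp t - 1 - t) * (Real.exp (2 * u) * (1 - Real.exp (-u)) ^ 2) := by ring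

private lemma term_le {τ p₀ p : ℝ} (hτ : 0 < τ) (hp0 : 0 ≤ p₀) (hp : 0 ≤ p)
    (h : 0 < p₀ → 0 < p ∧ Real.log (p₀ / p) ≤ τ) :
    p₀ * (Real.exp (|Real.log (p₀ / p)| / 2) - 1 - |Real.log (p₀ / p)| / 2) ≤
      (Real.exp (τ / 2) - 1 - τ / 2) / (1 - Real.exp (-(τ / 2))) ^ 2 *
        (Real.sqrt p - Real.sqrt p₀) ^ 2 := by
  set G := (Real.exp (τ / 2) - 1 - τ / 2) / (1 - Real.exp (-(τ / 2))) ^ 2 with hGdef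
  have hτ2 : (0:ℝ) < τ / 2 := by positivity
  have hG : (1:ℝ)/2 ≤ G := g_half hτ2
  rcases eq_or_lt_of_le hp0 with h0 | h0
  · rw [← h0]
    simp only [zero_mul]
    exact mul_nonneg (by linarith) (sq_nonneg _)
  · obtain ⟨hppos, hxle⟩ := h h0
    set x := Real.log (p₀ / p) with hx
    have hpp : p₀ = p * Real.exp x := by
      rw [hx, Real.exp_log (div_pos h0 hppos)]
      field_simp
    have habs : |x / 2| = |x| / 2 := by
      rw [abs_div]; norm_num
    have hsplit : Real.sqrt p₀ = Real.sqrt p * Real.exp (x / 2) := by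
      rw [hpp, Real.sqrt_mul hp, Real.exp_half]
    have hsq : (Real.sqrt p - Real.sqrt p₀) ^ 2 = p * (Real.exp (x / 2) - 1) ^ 2 := by
      rw [hsplit]
      calc (Real.sqrt p - Real.sqrt p * Real.exp (x / 2)) ^ 2
          = Real.sqrt p ^ 2 * (Real.exp (x / 2) - 1) ^ 2 := by ring
        _ = p * (Real.exp (x / 2) - 1) ^ 2 := by rw [Real.sq_sqrt hp]
    have hex : Real.exp x = Real.exp (2 * (x / 2)) := by ring_nf
    have hkey := key (t := τ / 2) (u := x / 2) hτ2 (by linarith)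
    calc p₀ * (Real.exp (|x| / 2) - 1 - |x| / 2)
        = p * (Real.exp (2 * (x / 2)) * (Real.exp |x / 2| - 1 - |x / 2|)) := by
          rw [hpp, habs, ← hex]; ring
      _ ≤ p * (G * (Real.exp (x / 2) - 1) ^ 2) := mul_le_mul_of_nonneg_left hkey hp
      _ = G * (p * (Real.exp (x / 2) - 1) ^ 2) := by ring
      _ = G * (Real.sqrt p - Real.sqrt p₀) ^ 2 := by rw [hsq]

theorem stmt8 (N : ℕ) (𝕊 : Finset (Finset ℕ)) (π : Finset ℕ → ℝ)
    (p₀ p : Finset ℕ → ℕ → ℝ) (τ : ℝ) (hτ : 0 < τ)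
    (hfam : IsAssortmentFamily N 𝕊) (hπ : IsPMF 𝕊 π)
    (hp₀ : IsChoiceModel 𝕊 p₀) (hp : IsChoiceModel 𝕊 p)
    (hdom : ∀ s ∈ 𝕊, 0 < π s → ∀ a ∈ insert 0 s, 0 < p₀ s a →
      0 < p s a ∧ Real.log (p₀ s a / p s a) ≤ τ) :
    ∑ s ∈ 𝕊, π s * ∑ a ∈ insert 0 s,
        p₀ s a * (Real.exp (|Real.log (p₀ s a / p s a)| / 2) - 1 -
          |Real.log (p₀ s a / p s a)| / 2) ≤
      (2 * (Real.exp (τ / 2) - 1 - τ / 2) / (1 - Real.exp (-τ / 2)) ^ 2) *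
        Hsq 𝕊 π p p₀ := by
  have hrw : (-τ / 2 : ℝ) = -(τ / 2) := by ring
  rw [hrw]
  set G := (Real.exp (τ / 2) - 1 - τ / 2) / (1 - Real.exp (-(τ / 2))) ^ 2 with hGdef
  have hκ : 2 * (Real.exp (τ / 2) - 1 - τ / 2) / (1 - Real.exp (-(τ / 2))) ^ 2 = 2 * G := by
    rw [hGdef]; ring
  rw [hκ]
  simp only [Hsq]
  rw [Finset.mul_sum]
  apply Finset.sum_le_sum
  intro s hs
  rcases eq_or_lt_of_le (hπ.1 s) with hzero | hpos
  · rw [← hzero]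
    simp
  · rw [show 2 * G * (π s * hsq p p₀ s) = π s * (2 * G * hsq p p₀ s) from by ring]
    apply mul_le_mul_of_nonneg_left _ hpos.le
    have h2 : 2 * G * hsq p p₀ s
        = ∑ a ∈ insert 0 s, G * (Real.sqrt (p s a) - Real.sqrt (p₀ s a)) ^ 2 := by
      simp only [hsq, Finset.mul_sum]
      exact Finset.sum_congr rfl fun a _ => by ring
    rw [h2]
    apply Finset.sum_le_sum
    intro a ha
    exact term_le hτ ((hp₀ s hs).1 a ha) ((hp s hs).1 a ha)
      (fun hp₀pos => hdom s hs hpos a ha hp₀pos)
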